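/- Every strongly primary monoid is a BF-monoid: every non-unit is a finite product of atoms, and every element has a finite set of lengths. Moreover, for every non-unit a, sup L(a) ≤ M(a), where M(a) is the least n with (H ∖ H^×)^n ⊆ aH. -/

import Mathlib

open Pointwise

private lemma list_prod_mem_pow {M : Type*} [CommMonoid M] (S : Set M) :
    ∀ L : List M, (∀ x ∈ L, x ∈ S) → L.prod ∈ S ^ L.length := by
  intro L
  induction L with
  | nil => intro _; simpa using Set.mem_one.mpr rfl
  | cons x t ih =>
      intro h
      rw [List.prod_cons, List.length_cons, pow_succ']
      exact Set.mul_mem_mul (h x (by simp)) (ih fun y hy => h y (by simp [hy]))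

/-- Every strongly primary monoid is a BF-monoid: every non-unit is a product of
atoms, all sets of lengths are finite, and sup L(a) ≤ M(a) for every non-unit a. -/
theorem stronglyPrimary_BF (M : Type*) [CancelCommMonoid M]
    (hm : ∃ a : M, ¬IsUnit a) (Mfun : M → ℕ)
    (hM : ∀ a : M, ¬IsUnit a →
      IsLeast {n : ℕ | 0 < n ∧ {b : M | ¬IsUnit b} ^ n ⊆ {c : M | a ∣ c}} (Mfun a)) :
    (∀ a : M, ¬IsUnit a → ∃ (k : ℕ) (f : Fin k → M),
        (∀ i, Irreducible (f i)) ∧ Associated (∏ i, f i) a) ∧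
    (∀ a : M, {k : ℕ | ∃ f : Fin k → M,
        (∀ i, Irreducible (f i)) ∧ Associated (∏ i, f i) a}.Finite) ∧
    (∀ a : M, ¬IsUnit a → ∀ k ∈ {k : ℕ | ∃ f : Fin k → M,
        (∀ i, Irreducible (f i)) ∧ Associated (∏ i, f i) a}, k ≤ Mfun a) := by
  -- key bound: any factorization of a nonunit `a` into nonunits has length ≤ Mfun a
  have key : ∀ a : M, ¬IsUnit a → ∀ L : List M, (∀ x ∈ L, ¬IsUnit x) →
      Associated L.prod a → L.length ≤ Mfun a := by
    intro a ha L hL hass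
    obtain ⟨⟨-, hsub⟩, -⟩ := hM a ha
    by_contra h
    push_neg at h
    set n := Mfun a with hn
    have hlen : (L.take n).length = n := by
      rw [List.length_take]; omega
    have hp : (L.take n).prod ∈ {b : M | ¬IsUnit b} ^ n := by
      have := list_prod_mem_pow {b : M | ¬IsUnit b} (L.take n)
        (fun x hx => hL x (List.mem_of_mem_take hx))
      rwa [hlen] at this
    obtain ⟨c, hc⟩ : a ∣ (L.take n).prod := hsub hp
    obtain ⟨u, hu⟩ := hass
    have hsplit : (L.take n).prod * (L.drop n).prod = L.prod := by
      rw [← List.prod_append, List.take_append_drop]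
    have hq : IsUnit (L.drop n).prod := by
      have : a * (c * ((L.drop n).prod * u)) = a * 1 := by
        rw [mul_one]
        calc a * (c * ((L.drop n).prod * u))
            = ((L.take n).prod * (L.drop n).prod) * u := by rw [hc]; ac_rfl
          _ = a := by rw [hsplit, hu]
      have h1 : c * ((L.drop n).prod * u) = 1 := mul_left_cancel this
      have h2 : (L.drop n).prod * ((u : M) * c) = 1 := by rw [← h1]; ac_rfl
      exact IsUnit.of_mul_eq_one _ h2
    have hne : L.drop n ≠ [] := by
      intro hnil
      have := congrArg List.length hnil
      simp [List.length_drop] at this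
      omega
    obtain ⟨x, hx⟩ := List.exists_mem_of_ne_nil _ hne
    exact hL x (List.mem_of_mem_drop hx) (isUnit_of_dvd_unit (List.dvd_prod hx) hq)
  -- atomicity via a maximal-length factorization into nonunits
  have atomic : ∀ a : M, ¬IsUnit a →
      ∃ L : List M, (∀ x ∈ L, Irreducible x) ∧ L.prod = a := by
    intro a ha
    set T : Set ℕ := {k | ∃ L : List M, L.length = k ∧ (∀ x ∈ L, ¬IsUnit x) ∧ L.prod = a}
      with hT
    have hne : T.Nonempty := ⟨1, [a], rfl, by simpa using ha, by simp⟩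
    have hbdd : BddAbove T := by
      refine ⟨Mfun a, fun k hk => ?_⟩
      obtain ⟨L, rfl, hL, hLp⟩ := hk
      exact key a ha L hL (hLp ▸ Associated.refl _)
    obtain ⟨L, hLlen, hL, hLp⟩ := Nat.sSup_mem hne hbdd
    refine ⟨L, fun x hx => ⟨hL x hx, ?_⟩, hLp⟩
    intro b c hbc
    by_contra hbu
    push_neg at hbu
    obtain ⟨hb, hc⟩ := hbu
    obtain ⟨s, t, rfl⟩ := List.append_of_mem hx
    have hmem : sSup T + 1 ∈ T := by
      refine ⟨s ++ b :: c :: t, ?_, ?_, ?_⟩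
      · simp only [List.length_append, List.length_cons] at hLlen ⊢; omega
      · intro y hy
        simp only [List.mem_append, List.mem_cons] at hy
        rcases hy with hy | hy | hy | hy
        · exact hL y (by simp [hy])
        · exact hy ▸ hb
        · exact hy ▸ hc
        · exact hL y (by simp [hy])
      · rw [← hLp]
        simp [List.prod_append, List.prod_cons, hbc, mul_assoc]
    have := le_csSup hbdd hmem
    omega
  refine ⟨?_, ?_, ?_⟩
  · intro a ha
    obtain ⟨L, hirr, hprod⟩ := atomic a ha
    refine ⟨L.length, L.get, fun i => hirr _ (L.get_mem ..), ?_⟩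
    rw [← List.prod_ofFn, List.ofFn_get, hprod]
  · intro a
    by_cases ha : IsUnit a
    · refine Set.Finite.subset (Set.finite_singleton 0) ?_
      rintro k ⟨f, hf, hass⟩
      rcases Nat.eq_zero_or_pos k with hk | hk
      · exact hk
      · exfalso
        have hu : IsUnit (∏ i, f i) := hass.symm.isUnit ha
        exact (hf ⟨0, hk⟩).not_isUnit
          (isUnit_of_dvd_unit (Finset.dvd_prod_of_mem f (Finset.mem_univ _)) hu)
    · refine Set.Finite.subset (Set.finite_Iic (Mfun a)) ?_
      rintro k ⟨f, hf, hass⟩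
      have := key a ha (List.ofFn f)
        (by intro x hx; obtain ⟨i, rfl⟩ := List.mem_ofFn.mp hx; exact (hf i).not_isUnit)
        (by rw [List.prod_ofFn]; exact hass)
      simpa using this
  · rintro a ha k ⟨f, hf, hass⟩
    have := key a ha (List.ofFn f)
      (by intro x hx; obtain ⟨i, rfl⟩ := List.mem_ofFn.mp hx; exact (hf i).not_isUnit)
      (by rw [List.prod_ofFn]; exact hass)
    simpa using this
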